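/- For all odd integers a, b and ε ∈ {±1}, the identity F_a² − F_{b−εa}² + F_b² + F_a·F_{b−εa}·L_b − F_a·F_b·L_{a+εb} − ε·F_{b−εa}·F_b·L_a + ε·F_a·F_b·L_a·L_b = 0 holds. -/

import Mathlib

/-- Fibonacci numbers extended to all integer indices. -/
def fibZ : ℤ → ℤ
  | Int.ofNat n => Nat.fib n
  | Int.negSucc n => (-1) ^ n * Nat.fib (n + 1)

/-- Lucas numbers extended to all integer indices: `L_n = F_{n−1} + F_{n+1}`. -/
def lucZ (n : ℤ) : ℤ := fibZ (n - 1) + fibZ (n + 1)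

lemma fibZ_zero : fibZ 0 = 0 := rfl
lemma fibZ_one : fibZ 1 = 1 := rfl
lemma fibZ_two : fibZ 2 = 1 := rfl
lemma fibZ_neg_one : fibZ (-1) = 1 := rfl
lemma lucZ_zero : lucZ 0 = 2 := rfl
lemma lucZ_one : lucZ 1 = 1 := rfl

lemma fib_rec (n : ℤ) : fibZ (n + 2) = fibZ (n + 1) + fibZ n := by
  rcases n with k | k
  · show fibZ (Int.ofNat (k + 2)) = fibZ (Int.ofNat (k + 1)) + fibZ (Int.ofNat k)
    simp [fibZ, Nat.fib_add_two]
    ring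
  · match k with
    | 0 => rfl
    | 1 => rfl
    | (k + 2) =>
      show fibZ (Int.negSucc k) = fibZ (Int.negSucc (k+1)) + fibZ (Int.negSucc (k+2))
      simp only [fibZ, Nat.fib_add_two]
      push_cast
      ring

lemma luc_rec (n : ℤ) : lucZ (n + 2) = lucZ (n + 1) + lucZ n := by
  unfold lucZ
  linear_combination (norm := ring_nf) fib_rec (n + 1) + fib_rec (n - 1)

lemma fib_add (n m : ℤ) : 2 * fibZ (m + n) = fibZ m * lucZ n + fibZ n * lucZ m := by
  suffices H : ∀ n : ℤ, (∀ m : ℤ, 2 * fibZ (m + n) = fibZ m * lucZ n + fibZ n * lucZ m) ∧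
      (∀ m : ℤ, 2 * fibZ (m + (n + 1)) = fibZ m * lucZ (n + 1) + fibZ (n + 1) * lucZ m) from
    (H n).1 m
  intro n
  induction n using Int.induction_on with
  | zero =>
    constructor
    · intro m
      simp [fibZ_zero, lucZ_zero]
      ring
    · intro m
      norm_num [fibZ_one, lucZ_one]
      unfold lucZ
      linear_combination (norm := ring_nf) fib_rec (m - 1)
  | succ i ih =>
    obtain ⟨h0, h1⟩ := ih
    refine ⟨h1, fun m => ?_⟩
    linear_combination (norm := ring_nf) h1 m + h0 m + 2 * fib_rec (m + i)
      - fibZ m * luc_rec i - lucZ m * fib_rec i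
  | pred i ih =>
    obtain ⟨h0, h1⟩ := ih
    refine ⟨fun m => ?_, fun m => ?_⟩
    · linear_combination (norm := ring_nf) h1 m - h0 m - 2 * fib_rec (m - i - 1)
        + fibZ m * luc_rec (-i - 1) + lucZ m * fib_rec (-i - 1)
    · linear_combination (norm := ring_nf) h0 m

lemma luc5 (m : ℤ) : lucZ (m + 1) + lucZ (m - 1) = 5 * fibZ m := by
  unfold lucZ
  linear_combination (norm := ring_nf) fib_rec m + fib_rec (m - 1) - fib_rec (m - 2)

lemma luc_add (n m : ℤ) : 2 * lucZ (m + n) = lucZ m * lucZ n + 5 * fibZ m * fibZ n := by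
  have h1 := fib_add n (m - 1)
  have h2 := fib_add n (m + 1)
  have h5 := luc5 m
  have : lucZ (m + n) = fibZ (m + n - 1) + fibZ (m + n + 1) := rfl
  have hl : lucZ m = fibZ (m - 1) + fibZ (m + 1) := rfl
  linear_combination (norm := ring_nf) 2 * this + h1 + h2 + fibZ n * h5 - lucZ n * hl

def catZ (n : ℤ) : ℤ := fibZ (n + 1) * fibZ (n - 1) - fibZ n ^ 2

lemma cat_step (n : ℤ) : catZ (n + 1) = -catZ n := by
  unfold catZ
  linear_combination (norm := ring_nf) fibZ n * fib_rec n - fibZ (n + 1) * fib_rec (n - 1)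

lemma cat_step2 (n : ℤ) : catZ (n + 2) = catZ n := by
  have := cat_step (n + 1)
  have h2 := cat_step n
  linear_combination (norm := ring_nf) this - h2

lemma cat_odd (n : ℤ) (hn : Odd n) : catZ n = -1 := by
  obtain ⟨k, hk⟩ := hn
  subst hk
  induction k using Int.induction_on with
  | zero => decide
  | succ i ih =>
    have h := cat_step2 (2 * (i : ℤ) + 1)
    rw [show 2 * (i : ℤ) + 1 + 2 = 2 * ((i : ℤ) + 1) + 1 by ring] at h
    rw [h]; exact ih
  | pred i ih =>
    have h := cat_step2 (2 * (-(i : ℤ) - 1) + 1)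
    rw [show 2 * (-(i : ℤ) - 1) + 1 + 2 = 2 * (-(i : ℤ)) + 1 by ring] at h
    rw [← h]; exact ih

lemma pell_odd (n : ℤ) (hn : Odd n) : lucZ n ^ 2 - 5 * fibZ n ^ 2 = -4 := by
  have hc := cat_odd n hn
  unfold catZ at hc
  have hl : lucZ n = fibZ (n - 1) + fibZ (n + 1) := rfl
  have hr := fib_rec (n - 1)
  linear_combination (norm := ring_nf) 4 * hc + (lucZ n + fibZ (n - 1) + fibZ (n + 1)) * hl
    + (fibZ (n + 1) - fibZ (n - 1) + fibZ n) * hr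

lemma fib_neg_succ (k : ℕ) : fibZ (-(k + 1 : ℤ)) = (-1) ^ k * fibZ (k + 1 : ℤ) := by
  have h1 : (-(k + 1 : ℤ)) = Int.negSucc k := by simp [Int.negSucc_eq]
  have h2 : ((k + 1 : ℤ)) = Int.ofNat (k + 1) := by simp
  rw [h1, h2]
  show (-1 : ℤ) ^ k * Nat.fib (k + 1) = (-1) ^ k * Nat.fib (k + 1)
  rfl

lemma fib_neg_odd (n : ℤ) (h : Odd n) : fibZ (-n) = fibZ n := by
  rcases n with k | k
  · match k with
    | 0 => simp at h
    | (j + 1) =>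
      have hj : Even j := by
        rcases h with ⟨m, hm⟩
        have hm' : (j : ℤ) + 1 = 2 * m + 1 := by simpa using hm
        exact Nat.even_iff.mpr (by omega)
      have := fib_neg_succ j
      rw [hj.neg_one_pow, one_mul] at this
      convert this using 2 <;> push_cast [Int.ofNat_eq_natCast] <;> try ring
  · have hk : Even k := by
      have hodd : Odd (Int.negSucc k) := h
      rw [Int.negSucc_eq] at hodd
      rcases hodd with ⟨m, hm⟩
      rcases Nat.even_or_odd k with he | ho
      · exact he
      · exfalso; rcases ho with ⟨m', hm'⟩; omega
    have := fib_neg_succ k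
    rw [hk.neg_one_pow, one_mul] at this
    rw [Int.negSucc_eq, neg_neg, this]

lemma fib_neg_even (n : ℤ) (h : Even n) : fibZ (-n) = -fibZ n := by
  rcases n with k | k
  · match k with
    | 0 => rfl
    | (j + 1) =>
      have hj : Odd j := by
        rcases h with ⟨m, hm⟩
        have hm' : (j : ℤ) + 1 = m + m := by simpa using hm
        exact Nat.odd_iff.mpr (by omega)
      have := fib_neg_succ j
      rw [hj.neg_one_pow] at this
      have goal : fibZ (-(↑(j + 1) : ℤ)) = -fibZ (↑(j + 1) : ℤ) := by
        have e1 : (-(↑(j + 1) : ℤ)) = -((j : ℤ) + 1) := by push_cast; ring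
        have e2 : ((↑(j + 1) : ℤ)) = ((j : ℤ) + 1) := by push_cast; ring
        rw [e1, e2, this]; ring
      exact goal
  · have hk : Odd k := by
      have heven : Even (Int.negSucc k) := h
      rw [Int.negSucc_eq] at heven
      rcases heven with ⟨m, hm⟩
      rcases Nat.even_or_odd k with he | ho
      · exfalso; rcases he with ⟨m', hm'⟩; omega
      · exact ho
    have := fib_neg_succ k
    rw [hk.neg_one_pow] at this
    rw [Int.negSucc_eq, neg_neg, this]
    ring

lemma luc_neg_odd (n : ℤ) (h : Odd n) : lucZ (-n) = -lucZ n := by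
  unfold lucZ
  have h1 : -n - 1 = -(n + 1) := by ring
  have h2 : -n + 1 = -(n - 1) := by ring
  rw [h1, h2, fib_neg_even _ (by rcases h with ⟨m,hm⟩; exact ⟨m+1, by omega⟩),
    fib_neg_even _ (by rcases h with ⟨m,hm⟩; exact ⟨m, by omega⟩)]
  ring

/-- the Fibonacci–Lucas identity
`F_a² − F_{b−εa}² + F_b² + F_a F_{b−εa} L_b − F_a F_b L_{a+εb}
  − ε F_{b−εa} F_b L_a + ε F_a F_b L_a L_b = 0`
for all odd integers `a, b` and `ε = ±1`. -/
theorem stmt18 (a b ε : ℤ) (ha : Odd a) (hb : Odd b) (hε : ε = 1 ∨ ε = -1) :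
    fibZ a ^ 2 - fibZ (b - ε * a) ^ 2 + fibZ b ^ 2
      + fibZ a * fibZ (b - ε * a) * lucZ b
      - fibZ a * fibZ b * lucZ (a + ε * b)
      - ε * fibZ (b - ε * a) * fibZ b * lucZ a
      + ε * fibZ a * fibZ b * lucZ a * lucZ b = 0 := by
  have pa := pell_odd a ha
  have pb := pell_odd b hb
  rcases hε with rfl | rfl
  · have hX := fib_add (-a) b
    rw [fib_neg_odd a ha, luc_neg_odd a ha] at hX
    have hY := luc_add b a
    rw [show b - 1 * a = b + -a by ring, show a + 1 * b = a + b by ring]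
    have h4 : 4 * (fibZ a ^ 2 - fibZ (b + -a) ^ 2 + fibZ b ^ 2
        + fibZ a * fibZ (b + -a) * lucZ b
        - fibZ a * fibZ b * lucZ (a + b)
        - 1 * fibZ (b + -a) * fibZ b * lucZ a
        + 1 * fibZ a * fibZ b * lucZ a * lucZ b) = 0 := by
      linear_combination (norm := ring_nf)
        (fibZ a * lucZ b - fibZ b * lucZ a - 2 * fibZ (b + -a)) * hX
        + (-2 * fibZ a * fibZ b) * hY
        + fibZ b ^ 2 * pa + fibZ a ^ 2 * pb
    linarith
  · have hX := fib_add a b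
    have hY := luc_add (-b) a
    rw [fib_neg_odd b hb, luc_neg_odd b hb] at hY
    rw [show b - (-1) * a = b + a by ring, show a + (-1) * b = a + -b by ring]
    have h4 : 4 * (fibZ a ^ 2 - fibZ (b + a) ^ 2 + fibZ b ^ 2
        + fibZ a * fibZ (b + a) * lucZ b
        - fibZ a * fibZ b * lucZ (a + -b)
        - (-1) * fibZ (b + a) * fibZ b * lucZ a
        + (-1) * fibZ a * fibZ b * lucZ a * lucZ b) = 0 := by
      linear_combination (norm := ring_nf)
        (fibZ a * lucZ b + fibZ b * lucZ a - 2 * fibZ (b + a)) * hX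
        + (-2 * fibZ a * fibZ b) * hY
        + fibZ b ^ 2 * pa + fibZ a ^ 2 * pb
    linarith
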